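/- Let ν be a non-degenerate probability measure on ℝ with support contained in (−∞, b]. Then the K-transform K_ν is strictly decreasing on the real interval (b, +∞): for all real z₁, z₂ with b < z₁ < z₂ one has K_ν(z₂) < K_ν(z₁). -/

import Mathlib

open MeasureTheory Filter Topology Set

/-- The Cauchy transform `G_ν(z) = ∫ 1/(z-x) dν(x)` of a measure on `ℝ`, for real `z`. -/
noncomputable def cauchyT (ν : Measure ℝ) (z : ℝ) : ℝ := ∫ x, (z - x)⁻¹ ∂ν

/-- The K-transform (self-energy) `K_ν(z) = z - 1/G_ν(z)`. -/
noncomputable def kT (ν : Measure ℝ) (z : ℝ) : ℝ := z - (cauchyT ν z)⁻¹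

open ENNReal

lemma eq_dirac_of_sing (ν : Measure ℝ) [IsProbabilityMeasure ν] (a : ℝ)
    (h : ν {a} = 1) : ν = Measure.dirac a := by
  ext s hs
  rw [Measure.dirac_apply' _ hs]
  by_cases ha : a ∈ s
  · have h1 : ν s ≤ 1 := prob_le_one
    have h2 : (1:ℝ≥0∞) ≤ ν s := h ▸ measure_mono (singleton_subset_iff.mpr ha)
    simp [Set.indicator_of_mem ha, le_antisymm h1 h2]
  · have : ν s ≤ ν ({a}ᶜ) := measure_mono (subset_compl_singleton_iff.mpr ha)
    have hc : ν ({a}ᶜ) = 0 := by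
      rw [measure_compl (measurableSet_singleton a) (measure_ne_top ν _), h]
      simp
    simp [Set.indicator_of_notMem ha, le_antisymm (this.trans hc.le) zero_le]

lemma offdiag_pos (ν : Measure ℝ) [IsProbabilityMeasure ν]
    (hnd : ∀ a : ℝ, ν ≠ Measure.dirac a) :
    0 < (ν.prod ν) {p : ℝ × ℝ | p.1 ≠ p.2} := by
  have hD : MeasurableSet {p : ℝ × ℝ | p.1 = p.2} :=
    measurableSet_eq_fun measurable_fst measurable_snd
  rcases eq_or_lt_of_le (show (0:ℝ≥0∞) ≤ (ν.prod ν) {p : ℝ × ℝ | p.1 ≠ p.2} from zero_le) with h | h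
  · exfalso
    have hDfull : (ν.prod ν) {p : ℝ × ℝ | p.1 = p.2} = 1 := by
      have := measure_add_measure_compl (μ := ν.prod ν) hD
      have hc : {p : ℝ × ℝ | p.1 = p.2}ᶜ = {p : ℝ × ℝ | p.1 ≠ p.2} := rfl
      rw [hc, ← h] at this
      simpa using this
    have hlin : ∫⁻ x, ν {x} ∂ν = 1 := by
      have := Measure.prod_apply (μ := ν) (ν := ν) hD
      rw [hDfull] at this
      have he : ∀ x : ℝ, (Prod.mk x ⁻¹' {p : ℝ × ℝ | p.1 = p.2}) = {x} := by
        intro x; ext y; simp [eq_comm]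
      simp_rw [he] at this
      exact this.symm
    have hmeas : Measurable fun x : ℝ => ν {x} := by
      have := measurable_measure_prodMk_left (ν := ν) hD
      simpa using this
    have hle : ∀ x : ℝ, ν {x} ≤ 1 := fun x => prob_le_one
    have hae : ∀ᵐ x ∂ν, ν {x} = 1 := by
      have hsub : ∫⁻ x, (1 - ν {x}) ∂ν = 0 := by
        rw [lintegral_sub hmeas]
        · rw [hlin]; simp
        · rw [hlin]; exact ENNReal.one_ne_top
        · exact ae_of_all _ hle
      have := (lintegral_eq_zero_iff (measurable_const.sub hmeas)).mp hsub
      filter_upwards [this] with x hx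
      have : (1:ℝ≥0∞) ≤ ν {x} := by
        by_contra hlt
        push_neg at hlt
        exact absurd hx (by simp [tsub_eq_zero_iff_le, not_le.mpr hlt])
      exact le_antisymm (hle x) this
    have hne : (ae ν).NeBot := ae_neBot.mpr (IsProbabilityMeasure.ne_zero ν)
    obtain ⟨a, ha⟩ := hae.exists
    exact hnd a (eq_dirac_of_sing ν a ha)
  · exact h

/-- for a non-degenerate probability measure `ν` with support contained in
`(-∞, b]`, the K-transform is strictly decreasing on `(b, +∞)`. -/
theorem kTransform_strictAnti
    (ν : Measure ℝ) [IsProbabilityMeasure ν]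
    (hnd : ∀ a : ℝ, ν ≠ Measure.dirac a)
    (b : ℝ) (hb : ν (Set.Ioi b) = 0) :
    ∀ z₁ z₂ : ℝ, b < z₁ → z₁ < z₂ → kT ν z₂ < kT ν z₁ := by
  intro z₁ z₂ hbz₁ h12
  have hbz₂ : b < z₂ := hbz₁.trans h12
  set f : ℝ → ℝ := fun x => (z₁ - x)⁻¹ with hf_def
  set g : ℝ → ℝ := fun x => (z₂ - x)⁻¹ with hg_def
  have hf_m : Measurable f := (measurable_const.sub measurable_id).inv
  have hg_m : Measurable g := (measurable_const.sub measurable_id).inv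
  have hae : ∀ᵐ x ∂ν, x ≤ b := by
    rw [ae_iff]
    have : {x : ℝ | ¬ x ≤ b} = Set.Ioi b := by ext x; simp
    rw [this, hb]
  -- pointwise facts on Iic b
  have hfpos : ∀ x : ℝ, x ≤ b → 0 < f x := fun x hx => by
    simp only [hf_def]; exact inv_pos.mpr (by linarith)
  have hgpos : ∀ x : ℝ, x ≤ b → 0 < g x := fun x hx => by
    simp only [hg_def]; exact inv_pos.mpr (by linarith)
  have hfle : ∀ x : ℝ, x ≤ b → f x ≤ (z₁ - b)⁻¹ := fun x hx => by
    simp only [hf_def]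
    exact inv_anti₀ (by linarith) (by linarith)
  have hgle : ∀ x : ℝ, x ≤ b → g x ≤ (z₂ - b)⁻¹ := fun x hx => by
    simp only [hg_def]
    exact inv_anti₀ (by linarith) (by linarith)
  -- integrability
  have hf_int : Integrable f ν := by
    refine Integrable.mono' (integrable_const ((z₁ - b)⁻¹)) hf_m.aestronglyMeasurable ?_
    filter_upwards [hae] with x hx
    rw [Real.norm_eq_abs, abs_of_pos (hfpos x hx)]; exact hfle x hx
  have hg_int : Integrable g ν := by
    refine Integrable.mono' (integrable_const ((z₂ - b)⁻¹)) hg_m.aestronglyMeasurable ?_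
    filter_upwards [hae] with x hx
    rw [Real.norm_eq_abs, abs_of_pos (hgpos x hx)]; exact hgle x hx
  have hfg_int : Integrable (fun x => f x * g x) ν := by
    refine Integrable.mono' (integrable_const ((z₁ - b)⁻¹ * (z₂ - b)⁻¹))
      (hf_m.mul hg_m).aestronglyMeasurable ?_
    filter_upwards [hae] with x hx
    rw [Real.norm_eq_abs, abs_of_pos (mul_pos (hfpos x hx) (hgpos x hx))]
    exact mul_le_mul (hfle x hx) (hgle x hx) (hgpos x hx).le
      (inv_pos.mpr (by linarith)).le
  set G₁ : ℝ := ∫ x, f x ∂ν with hG1_def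
  set G₂ : ℝ := ∫ x, g x ∂ν with hG2_def
  set H : ℝ := ∫ x, f x * g x ∂ν with hH_def
  have hIic : ν (Set.Iic b) = 1 := by
    have : Set.Iic b = (Set.Ioi b)ᶜ := by ext x; simp
    rw [this, measure_compl measurableSet_Ioi (measure_ne_top ν _), hb, measure_univ]
    simp
  -- positivity of G₁, G₂
  have hG1_pos : 0 < G₁ := by
    rw [hG1_def, integral_pos_iff_support_of_nonneg_ae ?nn hf_int]
    case nn => filter_upwards [hae] with x hx; exact (hfpos x hx).le
    refine lt_of_lt_of_le (b := ν (Set.Iic b)) ?_ (measure_mono ?_)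
    · rw [hIic]; norm_num
    · intro x hx
      exact Function.mem_support.mpr (ne_of_gt (hfpos x hx))
  have hG2_pos : 0 < G₂ := by
    rw [hG2_def, integral_pos_iff_support_of_nonneg_ae ?nn hg_int]
    case nn => filter_upwards [hae] with x hx; exact (hgpos x hx).le
    refine lt_of_lt_of_le (b := ν (Set.Iic b)) ?_ (measure_mono ?_)
    · rw [hIic]; norm_num
    · intro x hx
      exact Function.mem_support.mpr (ne_of_gt (hgpos x hx))
  -- difference identity
  have hdiff : G₁ - G₂ = (z₂ - z₁) * H := by
    rw [hG1_def, hG2_def, ← integral_sub hf_int hg_int, hH_def, ← integral_const_mul]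
    refine integral_congr_ae ?_
    filter_upwards [hae] with x hx
    have h1 : z₁ - x ≠ 0 := ne_of_gt (by linarith)
    have h2 : z₂ - x ≠ 0 := ne_of_gt (by linarith)
    simp only [hf_def, hg_def]
    field_simp
    ring
  -- Chebyshev: H > G₁ * G₂ via a double integral
  set μ : Measure (ℝ × ℝ) := ν.prod ν with hμ_def
  set F : ℝ × ℝ → ℝ := fun p => (f p.1 - f p.2) * (g p.1 - g p.2) with hF_def
  have hint1 : Integrable (fun p : ℝ × ℝ => (f p.1 * g p.1) * (1 : ℝ)) μ :=
    hfg_int.mul_prod (integrable_const 1)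
  have hint2 : Integrable (fun p : ℝ × ℝ => f p.1 * g p.2) μ :=
    hf_int.mul_prod hg_int
  have hint3 : Integrable (fun p : ℝ × ℝ => g p.1 * f p.2) μ :=
    hg_int.mul_prod hf_int
  have hint4 : Integrable (fun p : ℝ × ℝ => (1 : ℝ) * (f p.2 * g p.2)) μ :=
    (integrable_const 1).mul_prod hfg_int
  have hFeq : ∀ p : ℝ × ℝ, F p =
      ((f p.1 * g p.1) * (1 : ℝ) - f p.1 * g p.2) -
        (g p.1 * f p.2 - (1 : ℝ) * (f p.2 * g p.2)) := by
    intro p; simp only [hF_def]; ring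
  have hF_int : Integrable F μ :=
    (((hint1.sub hint2).sub (hint3.sub hint4)).congr
      (ae_of_all _ fun p => (hFeq p).symm))
  have hFval : ∫ p, F p ∂μ = 2 * H - 2 * (G₁ * G₂) := by
    calc ∫ p, F p ∂μ
        = ∫ p, (((f p.1 * g p.1) * (1 : ℝ) - f p.1 * g p.2) -
            (g p.1 * f p.2 - (1 : ℝ) * (f p.2 * g p.2))) ∂μ :=
          integral_congr_ae (ae_of_all _ hFeq)
      _ = ((∫ p : ℝ × ℝ, (f p.1 * g p.1) * (1 : ℝ) ∂μ) - ∫ p : ℝ × ℝ, f p.1 * g p.2 ∂μ) -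
            ((∫ p : ℝ × ℝ, g p.1 * f p.2 ∂μ) - ∫ p : ℝ × ℝ, (1 : ℝ) * (f p.2 * g p.2) ∂μ) := by
          have e1 := integral_sub (hint1.sub hint2) (hint3.sub hint4)
          have e2 := integral_sub hint1 hint2
          have e3 := integral_sub hint3 hint4
          simp only [Pi.sub_apply] at e1
          rw [e1, e2, e3]
      _ = (H * (∫ _x : ℝ, (1 : ℝ) ∂ν) - G₁ * G₂) -
            (G₂ * G₁ - (∫ _x : ℝ, (1 : ℝ) ∂ν) * H) := by
          rw [hμ_def, integral_prod_mul (fun x => f x * g x) (fun _ => (1 : ℝ)),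
            integral_prod_mul f g, integral_prod_mul g f,
            integral_prod_mul (fun _ => (1 : ℝ)) (fun x => f x * g x)]
      _ = 2 * H - 2 * (G₁ * G₂) := by
          simp only [integral_const, measure_univ, ENNReal.toReal_one, probReal_univ, smul_eq_mul]
          ring
  -- a.e. coordinates lie in Iic b
  have hfst : ∀ᵐ p ∂μ, p.1 ≤ b := by
    rw [ae_iff]
    have hset : {p : ℝ × ℝ | ¬ p.1 ≤ b} = Set.Ioi b ×ˢ Set.univ := by
      ext p; simp
    rw [hset, hμ_def, Measure.prod_prod, hb, zero_mul]
  have hsnd : ∀ᵐ p ∂μ, p.2 ≤ b := by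
    rw [ae_iff]
    have hset : {p : ℝ × ℝ | ¬ p.2 ≤ b} = Set.univ ×ˢ Set.Ioi b := by
      ext p; simp
    rw [hset, hμ_def, Measure.prod_prod, hb, mul_zero]
  have hFsq : ∀ p : ℝ × ℝ, p.1 ≤ b → p.2 ≤ b → F p =
      (p.1 - p.2) ^ 2 *
        ((z₁ - p.1)⁻¹ * (z₁ - p.2)⁻¹ * ((z₂ - p.1)⁻¹ * (z₂ - p.2)⁻¹)) := by
    intro p h1 h2
    have e1 : z₁ - p.1 ≠ 0 := ne_of_gt (by linarith)
    have e2 : z₁ - p.2 ≠ 0 := ne_of_gt (by linarith)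
    have e3 : z₂ - p.1 ≠ 0 := ne_of_gt (by linarith)
    have e4 : z₂ - p.2 ≠ 0 := ne_of_gt (by linarith)
    simp only [hF_def, hf_def, hg_def]
    field_simp
    ring
  have hF_nn : 0 ≤ᵐ[μ] F := by
    filter_upwards [hfst, hsnd] with p h1 h2
    rw [Pi.zero_apply, hFsq p h1 h2]
    have i1 : (0:ℝ) ≤ (z₁ - p.1)⁻¹ := (inv_pos.mpr (by linarith)).le
    have i2 : (0:ℝ) ≤ (z₁ - p.2)⁻¹ := (inv_pos.mpr (by linarith)).le
    have i3 : (0:ℝ) ≤ (z₂ - p.1)⁻¹ := (inv_pos.mpr (by linarith)).le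
    have i4 : (0:ℝ) ≤ (z₂ - p.2)⁻¹ := (inv_pos.mpr (by linarith)).le
    positivity
  have hFpos : 0 < ∫ p, F p ∂μ := by
    rw [integral_pos_iff_support_of_nonneg_ae hF_nn hF_int]
    have hsub : {p : ℝ × ℝ | p.1 ≠ p.2} ⊆
        Function.support F ∪ ({p : ℝ × ℝ | ¬ p.1 ≤ b} ∪ {p : ℝ × ℝ | ¬ p.2 ≤ b}) := by
      intro p hp
      by_cases h1 : p.1 ≤ b
      · by_cases h2 : p.2 ≤ b
        · left
          rw [Function.mem_support, hFsq p h1 h2]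
          have i1 : (0:ℝ) < (z₁ - p.1)⁻¹ := inv_pos.mpr (by linarith)
          have i2 : (0:ℝ) < (z₁ - p.2)⁻¹ := inv_pos.mpr (by linarith)
          have i3 : (0:ℝ) < (z₂ - p.1)⁻¹ := inv_pos.mpr (by linarith)
          have i4 : (0:ℝ) < (z₂ - p.2)⁻¹ := inv_pos.mpr (by linarith)
          have hne : p.1 - p.2 ≠ 0 := sub_ne_zero.mpr hp
          positivity
        · right; right; exact h2
      · right; left; exact h1
    have hz1 : μ {p : ℝ × ℝ | ¬ p.1 ≤ b} = 0 := by
      have hset : {p : ℝ × ℝ | ¬ p.1 ≤ b} = Set.Ioi b ×ˢ Set.univ := by ext p; simp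
      rw [hset, hμ_def, Measure.prod_prod, hb, zero_mul]
    have hz2 : μ {p : ℝ × ℝ | ¬ p.2 ≤ b} = 0 := by
      have hset : {p : ℝ × ℝ | ¬ p.2 ≤ b} = Set.univ ×ˢ Set.Ioi b := by ext p; simp
      rw [hset, hμ_def, Measure.prod_prod, hb, mul_zero]
    have hstep : μ {p : ℝ × ℝ | p.1 ≠ p.2} ≤ μ (Function.support F) := by
      calc μ {p : ℝ × ℝ | p.1 ≠ p.2}
          ≤ μ (Function.support F ∪ ({p : ℝ × ℝ | ¬ p.1 ≤ b} ∪ {p : ℝ × ℝ | ¬ p.2 ≤ b})) :=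
            measure_mono hsub
        _ ≤ μ (Function.support F) + μ ({p : ℝ × ℝ | ¬ p.1 ≤ b} ∪ {p : ℝ × ℝ | ¬ p.2 ≤ b}) :=
            measure_union_le _ _
        _ ≤ μ (Function.support F) + (μ {p : ℝ × ℝ | ¬ p.1 ≤ b} + μ {p : ℝ × ℝ | ¬ p.2 ≤ b}) :=
            add_le_add le_rfl (measure_union_le _ _)
        _ = μ (Function.support F) := by rw [hz1, hz2]; simp
    exact lt_of_lt_of_le (offdiag_pos ν hnd) hstep
  -- conclude H > G₁ G₂
  have hH_gt : G₁ * G₂ < H := by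
    rw [hFval] at hFpos; linarith
  -- finish
  have hcG1 : cauchyT ν z₁ = G₁ := rfl
  have hcG2 : cauchyT ν z₂ = G₂ := rfl
  simp only [kT, hcG1, hcG2]
  have hinv : G₂⁻¹ - G₁⁻¹ = (G₁ - G₂) * (G₁⁻¹ * G₂⁻¹) := by
    rw [sub_mul, show G₁ * (G₁⁻¹ * G₂⁻¹) = G₁ * G₁⁻¹ * G₂⁻¹ by ring,
      show G₂ * (G₁⁻¹ * G₂⁻¹) = G₂ * G₂⁻¹ * G₁⁻¹ by ring,
      mul_inv_cancel₀ hG1_pos.ne', mul_inv_cancel₀ hG2_pos.ne', one_mul, one_mul]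
  have hkey : z₂ - z₁ < G₂⁻¹ - G₁⁻¹ := by
    rw [hinv, hdiff]
    have h1 : (1:ℝ) < H * (G₁⁻¹ * G₂⁻¹) := by
      have := mul_lt_mul_of_pos_right hH_gt
        (mul_pos (inv_pos.mpr hG1_pos) (inv_pos.mpr hG2_pos))
      have hone : G₁ * G₂ * (G₁⁻¹ * G₂⁻¹) = 1 := by
        field_simp
      linarith
    have hz : 0 < z₂ - z₁ := by linarith
    calc z₂ - z₁ = (z₂ - z₁) * 1 := by ring
      _ < (z₂ - z₁) * (H * (G₁⁻¹ * G₂⁻¹)) := by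
          exact mul_lt_mul_of_pos_left h1 hz
      _ = (z₂ - z₁) * H * (G₁⁻¹ * G₂⁻¹) := by ring
  linarith
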